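/- Let U : (0,∞) → (0,∞) be locally integrable, integrable on intervals containing 0, and regularly varying at infinity with index -α where α ≤ 1. Then x ↦ ∫₀ˣ U(t) dt is regularly varying at infinity with index 1-α, and lim_{x→∞} x U(x)/∫₀ˣ U(t) dt = 1 - α. -/

import Mathlib

open Filter Topology MeasureTheory Set

lemma uct_aux (h : ℝ → ℝ) (hm : Measurable h) (β : ℝ)
    (hlim : ∀ u : ℝ, Tendsto (fun t => h (t + u) - h t) atTop (𝓝 (β * u)))
    (b ε : ℝ) (hb : 0 < b) (hε : 0 < ε) :
    ∀ᶠ t in atTop, ∀ u ∈ Icc (-b) b, |h (t + u) - h t - β * u| < ε := by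
  by_contra hcon
  rw [Filter.not_eventually] at hcon
  -- extract sequences t n ≥ n, u n ∈ Icc with |...| ≥ ε
  have hseq : ∀ n : ℕ, ∃ t : ℝ, (n : ℝ) ≤ t ∧ ∃ u ∈ Icc (-b) b,
      ε ≤ |h (t + u) - h t - β * u| := by
    intro n
    rcases (frequently_atTop.1 hcon (n : ℝ)) with ⟨t, ht, hP⟩
    push_neg at hP
    rcases hP with ⟨u, hu, hub⟩
    exact ⟨t, ht, u, hu, hub⟩
  choose t ht u hu hbad using hseq
  have htt : Tendsto t atTop atTop :=
    tendsto_atTop_mono ht tendsto_natCast_atTop_atTop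
  have htt' : Tendsto (fun n => t n + u n) atTop atTop := by
    apply tendsto_atTop_mono (f := fun n => t n - b)
    · intro n; have := (hu n).1; linarith
    · exact htt.atTop_add tendsto_const_nhds
  set φ : ℕ → ℝ → ℝ := fun n v => h (t n + v) - h (t n) - β * v with hφ
  set θ : ℕ → ℝ → ℝ := fun n w => h (t n + u n - w) - h (t n + u n) + β * w with hθ
  have hφlim : ∀ v : ℝ, Tendsto (fun n => φ n v) atTop (𝓝 0) := by
    intro v
    have := ((hlim v).comp htt).sub_const (β * v)
    simpa [hφ, Function.comp] using this
  have hθlim : ∀ w : ℝ, Tendsto (fun n => θ n w) atTop (𝓝 0) := by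
    intro w
    have := ((hlim (-w)).comp htt').add_const (β * w)
    have e : β * -w + β * w = 0 := by ring
    rw [e] at this
    simpa [hθ, Function.comp, sub_eq_add_neg] using this
  have hφm : ∀ n, StronglyMeasurable (φ n) := by
    intro n
    exact ((hm.comp (measurable_const.add measurable_id)).sub_const _
      |>.sub (measurable_const.mul measurable_id)).stronglyMeasurable
  have hθm : ∀ n, StronglyMeasurable (θ n) := by
    intro n
    exact ((hm.comp (measurable_const.sub measurable_id)).sub_const _
      |>.add (measurable_const.mul measurable_id)).stronglyMeasurable
  set J : Set ℝ := Icc (-(2*b+1)) b with hJ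
  set I : Set ℝ := Icc 0 (b+1) with hI
  set δ : ℝ := (b+1)/4 with hδ
  have hδ0 : 0 < δ := by positivity
  obtain ⟨BJ, hBJsub, hBJms, hBJm, hBJu⟩ :=
    MeasureTheory.tendstoUniformlyOn_of_ae_tendsto (μ := volume) (s := J) hφm
      stronglyMeasurable_zero measurableSet_Icc measure_Icc_lt_top.ne
      (ae_of_all _ fun v _ => by simpa using hφlim v) hδ0
  obtain ⟨BI, hBIsub, hBIms, hBIm, hBIu⟩ :=
    MeasureTheory.tendstoUniformlyOn_of_ae_tendsto (μ := volume) (s := I) hθm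
      stronglyMeasurable_zero measurableSet_Icc measure_Icc_lt_top.ne
      (ae_of_all _ fun w _ => by simpa using hθlim w) hδ0
  -- for each n pick w ∈ (I \ BI) with u n - w ∈ (J \ BJ)
  have hpick : ∀ n, ∃ w, w ∈ I \ BI ∧ u n - w ∈ J \ BJ := by
    intro n
    by_contra hemp
    push_neg at hemp
    have hsub : I ⊆ BI ∪ (fun w => u n - w) ⁻¹' BJ := by
      intro w hw
      by_cases h1 : w ∈ BI
      · exact Or.inl h1
      · right
        have hwJ : u n - w ∈ J := by
          have h1 := (hu n).1; have h2 := (hu n).2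
          have h3 := hw.1; have h4 := hw.2
          simp only [hJ, mem_Icc] at *
          constructor <;> linarith
        by_cases h2 : u n - w ∈ BJ
        · exact h2
        · exact absurd hwJ.2 (fun _ => (hemp w ⟨hw, h1⟩ ⟨hwJ, h2⟩))
    have hIle : volume I ≤ volume BI + volume BJ := by
      calc volume I ≤ volume (BI ∪ (fun w => u n - w) ⁻¹' BJ) := measure_mono hsub
        _ ≤ volume BI + volume ((fun w => u n - w) ⁻¹' BJ) := measure_union_le _ _
        _ = volume BI + volume BJ := by
            rw [(Measure.measurePreserving_sub_left volume (u n)).measure_preimage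
              (hBJms.nullMeasurableSet)]
    have : ENNReal.ofReal (b+1) ≤ ENNReal.ofReal δ + ENNReal.ofReal δ := by
      calc ENNReal.ofReal (b+1) = volume I := by
            rw [hI, Real.volume_Icc]; norm_num
        _ ≤ volume BI + volume BJ := hIle
        _ ≤ _ := add_le_add hBIm hBJm
    rw [← ENNReal.ofReal_add hδ0.le hδ0.le] at this
    rw [ENNReal.ofReal_le_ofReal_iff (by positivity)] at this
    simp only [hδ] at this; linarith
  choose w hwI hwJ using hpick
  rw [Metric.tendstoUniformlyOn_iff] at hBJu hBIu
  have hev := ((hBJu (ε/2) (by positivity)).and (hBIu (ε/2) (by positivity))).exists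
  obtain ⟨n, hn1, hn2⟩ := hev
  have e1 : |φ n (u n - w n)| < ε/2 := by
    have := hn1 _ (hwJ n)
    rw [Real.dist_eq] at this; simpa [abs_sub_comm] using this
  have e2 : |θ n (w n)| < ε/2 := by
    have := hn2 _ (hwI n)
    rw [Real.dist_eq] at this; simpa [abs_sub_comm] using this
  have key : h (t n + u n) - h (t n) - β * u n = φ n (u n - w n) - θ n (w n) := by
    simp only [hφ, hθ]
    have : t n + (u n - w n) = t n + u n - w n := by ring
    rw [this]; ring
  have : ε ≤ |φ n (u n - w n) - θ n (w n)| := key ▸ hbad n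
  have habs : |φ n (u n - w n) - θ n (w n)| ≤ |φ n (u n - w n)| + |θ n (w n)| :=
    abs_sub _ _
  linarith

lemma uct_mul (U : ℝ → ℝ) (hUm : Measurable U) (hUpos : ∀ x > 0, 0 < U x) (α : ℝ)
    (hrv : ∀ q > 0, Tendsto (fun x : ℝ => U (q * x) / U x) atTop (𝓝 (q ^ (-α))))
    (q ε : ℝ) (hq : 1 < q) (hε : 0 < ε) :
    ∀ᶠ x : ℝ in atTop, 0 < x ∧ ∀ s ∈ Icc (1:ℝ) q,
      Real.exp (-ε) * (s ^ (-α) * U x) ≤ U (s * x) ∧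
        U (s * x) ≤ Real.exp ε * (s ^ (-α) * U x) := by
  set h : ℝ → ℝ := fun t => Real.log (U (Real.exp t)) with hh
  have hm : Measurable h := Real.measurable_log.comp (hUm.comp Real.measurable_exp)
  have hlim : ∀ u : ℝ, Tendsto (fun t => h (t + u) - h t) atTop (𝓝 ((-α) * u)) := by
    intro u
    have h1 : Tendsto (fun t : ℝ => U (Real.exp u * Real.exp t) / U (Real.exp t)) atTop
        (𝓝 ((Real.exp u) ^ (-α))) :=
      (hrv (Real.exp u) (Real.exp_pos u)).comp Real.tendsto_exp_atTop
    have h2 := h1.log (ne_of_gt (Real.rpow_pos_of_pos (Real.exp_pos u) _))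
    rw [Real.log_rpow (Real.exp_pos u), Real.log_exp] at h2
    apply h2.congr
    intro t
    have hpos1 : 0 < U (Real.exp u * Real.exp t) :=
      hUpos _ (by positivity)
    have hpos2 : 0 < U (Real.exp t) := hUpos _ (Real.exp_pos t)
    rw [Real.log_div (ne_of_gt hpos1) (ne_of_gt hpos2), hh]
    simp only []
    rw [Real.exp_add, mul_comm (Real.exp t) (Real.exp u)]
  have huct := uct_aux h hm (-α) hlim (Real.log q) ε (Real.log_pos hq) hε
  filter_upwards [Real.tendsto_log_atTop.eventually huct, eventually_gt_atTop 0]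
    with x hP hx0
  refine ⟨hx0, fun s hs => ?_⟩
  have hs1 : (1:ℝ) ≤ s := hs.1
  have hspos : 0 < s := lt_of_lt_of_le one_pos hs1
  have hu : Real.log s ∈ Icc (-(Real.log q)) (Real.log q) := by
    constructor
    · have : 0 ≤ Real.log s := Real.log_nonneg hs1
      have : 0 < Real.log q := Real.log_pos hq
      linarith
    · exact Real.log_le_log hspos hs.2
  have hbd := hP (Real.log s) hu
  have e1 : h (Real.log x + Real.log s) = Real.log (U (s * x)) := by
    rw [hh]; simp only []
    rw [Real.exp_add, Real.exp_log hx0, Real.exp_log hspos, mul_comm]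
  have e2 : h (Real.log x) = Real.log (U x) := by
    rw [hh]; simp only []; rw [Real.exp_log hx0]
  rw [e1, e2] at hbd
  set D : ℝ := Real.log (U (s * x)) - Real.log (U x) - (-α) * Real.log s with hD
  have hUx : 0 < U x := hUpos x hx0
  have hUsx : 0 < U (s * x) := hUpos _ (by positivity)
  have key : U (s * x) = Real.exp D * (s ^ (-α) * U x) := by
    have h3 : Real.exp D = U (s * x) / U x * s ^ α := by
      rw [hD]
      have : Real.log (U (s * x)) - Real.log (U x) - (-α) * Real.log s
          = (Real.log (U (s * x)) - Real.log (U x)) + α * Real.log s := by ring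
      rw [this, Real.exp_add, Real.exp_sub, Real.exp_log hUsx, Real.exp_log hUx,
        Real.rpow_def_of_pos hspos, mul_comm (Real.log s) α]
    rw [h3]
    have hsa : s ^ α * s ^ (-α) = 1 := by
      rw [← Real.rpow_add hspos]; simp
    field_simp
    linear_combination (-1 : ℝ) * hsa
  obtain ⟨hlo, hhi⟩ := abs_lt.1 hbd
  have hfac : 0 < s ^ (-α) * U x := by positivity
  constructor
  · rw [key]
    have := Real.exp_lt_exp.2 hlo
    nlinarith
  · rw [key]
    have := Real.exp_lt_exp.2 hhi
    nlinarith

lemma diff_tendsto (U : ℝ → ℝ) (hUm : Measurable U) (hUpos : ∀ x > 0, 0 < U x) (α : ℝ)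
    (hloc : ∀ x > 0, IntegrableOn U (Ioc 0 x) volume)
    (hrv : ∀ q > 0, Tendsto (fun x : ℝ => U (q * x) / U x) atTop (𝓝 (q ^ (-α))))
    (q : ℝ) (hq : 1 < q) :
    Tendsto (fun x : ℝ => ((∫ t in Ioc (0:ℝ) (q*x), U t) - ∫ t in Ioc (0:ℝ) x, U t) / (x * U x))
      atTop (𝓝 (∫ s in (1:ℝ)..q, s ^ (-α))) := by
  set I : ℝ := ∫ s in (1:ℝ)..q, s ^ (-α) with hIdef
  have hI0 : 0 ≤ I := intervalIntegral.integral_nonneg hq.le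
    (fun u hu => Real.rpow_nonneg (le_trans zero_le_one hu.1) _)
  rw [Metric.tendsto_nhds]
  intro δ hδ
  set ε : ℝ := Real.log (1 + δ/(2*(I+1))) with hεdef
  have hd0 : 0 < δ/(2*(I+1)) := by positivity
  have hε : 0 < ε := Real.log_pos (by linarith)
  have hexp : Real.exp ε = 1 + δ/(2*(I+1)) := Real.exp_log (by positivity)
  filter_upwards [uct_mul U hUm hUpos α hrv q ε hq hε] with x hx
  obtain ⟨hx0, hbd⟩ := hx
  have hxq : x ≤ q * x := by nlinarith
  have hqx0 : 0 < q * x := by positivity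
  have hiU1 : IntervalIntegrable U volume 0 x :=
    (intervalIntegrable_iff_integrableOn_Ioc_of_le hx0.le).2 (hloc x hx0)
  have hiU2 : IntervalIntegrable U volume x (q*x) :=
    (intervalIntegrable_iff_integrableOn_Ioc_of_le hxq).2
      ((hloc (q*x) hqx0).mono_set (Ioc_subset_Ioc hx0.le le_rfl))
  have hVq : (∫ t in Ioc (0:ℝ) (q*x), U t) - (∫ t in Ioc (0:ℝ) x, U t)
      = ∫ t in x..(q*x), U t := by
    rw [← intervalIntegral.integral_of_le hx0.le, ← intervalIntegral.integral_of_le hqx0.le]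
    rw [← intervalIntegral.integral_add_adjacent_intervals hiU1 hiU2]
    ring
  have hpt : ∀ t ∈ Icc x (q*x),
      Real.exp (-ε) * ((t/x) ^ (-α) * U x) ≤ U t ∧
        U t ≤ Real.exp ε * ((t/x) ^ (-α) * U x) := by
    intro t ht
    have h1 : (1:ℝ) ≤ t/x := (one_le_div hx0).2 ht.1
    have h2 : t/x ≤ q := (div_le_iff₀ hx0).2 ht.2
    have := hbd (t/x) ⟨h1, h2⟩
    rwa [div_mul_cancel₀ t (ne_of_gt hx0)] at this
  have hcont : ContinuousOn (fun t : ℝ => (t/x) ^ (-α)) (Icc x (q*x)) := by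
    apply ContinuousOn.rpow_const
    · exact (continuousOn_id.div_const x)
    · intro t ht
      left
      have : 0 < t / x := div_pos (lt_of_lt_of_le hx0 ht.1) hx0
      exact ne_of_gt this
  have hiB : IntervalIntegrable (fun t : ℝ => (t/x) ^ (-α)) volume x (q*x) := by
    apply ContinuousOn.intervalIntegrable
    rwa [uIcc_of_le hxq]
  have hsc : (∫ t in x..(q*x), (t/x) ^ (-α)) = x * I := by
    have e : (fun t : ℝ => (t/x) ^ (-α)) = fun t : ℝ => (fun s : ℝ => s ^ (-α)) (t * x⁻¹) := by
      funext t; rw [div_eq_mul_inv]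
    have e1 : x * x⁻¹ = 1 := mul_inv_cancel₀ (ne_of_gt hx0)
    have e2 : (q*x) * x⁻¹ = q := by field_simp
    rw [e, intervalIntegral.integral_comp_mul_right (fun s : ℝ => s ^ (-α))
      (inv_ne_zero (ne_of_gt hx0)), e1, e2, smul_eq_mul, inv_inv]
  have hup : (∫ t in x..(q*x), U t) ≤ Real.exp ε * U x * (x * I) := by
    have : (∫ t in x..(q*x), U t) ≤ ∫ t in x..(q*x), Real.exp ε * U x * ((t/x) ^ (-α)) := by
      apply intervalIntegral.integral_mono_on hxq hiU2
        ((hiB.const_mul _))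
      intro t ht
      have := (hpt t ht).2
      nlinarith [this]
    calc (∫ t in x..(q*x), U t) ≤ _ := this
      _ = Real.exp ε * U x * ∫ t in x..(q*x), (t/x) ^ (-α) := by
          rw [intervalIntegral.integral_const_mul]
      _ = Real.exp ε * U x * (x * I) := by rw [hsc]
  have hlo : Real.exp (-ε) * U x * (x * I) ≤ ∫ t in x..(q*x), U t := by
    have : (∫ t in x..(q*x), Real.exp (-ε) * U x * ((t/x) ^ (-α))) ≤ ∫ t in x..(q*x), U t := by
      apply intervalIntegral.integral_mono_on hxq ((hiB.const_mul _)) hiU2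
      intro t ht
      have := (hpt t ht).1
      nlinarith [this]
    calc Real.exp (-ε) * U x * (x * I)
        = ∫ t in x..(q*x), Real.exp (-ε) * U x * ((t/x) ^ (-α)) := by
          rw [intervalIntegral.integral_const_mul, hsc]
      _ ≤ _ := this
  rw [hVq]
  set N : ℝ := ∫ t in x..(q*x), U t with hN
  have hP : 0 < x * U x := mul_pos hx0 (hUpos x hx0)
  have hNP1 : N / (x * U x) ≤ Real.exp ε * I := by
    rw [div_le_iff₀ hP]
    calc N ≤ Real.exp ε * U x * (x * I) := hup
      _ = Real.exp ε * I * (x * U x) := by ring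
  have hNP2 : Real.exp (-ε) * I ≤ N / (x * U x) := by
    rw [le_div_iff₀ hP]
    calc Real.exp (-ε) * I * (x * U x) = Real.exp (-ε) * U x * (x * I) := by ring
      _ ≤ N := hlo
  rw [Real.dist_eq]
  have hee : Real.exp (-ε) = (Real.exp ε)⁻¹ := Real.exp_neg ε
  have he1 : 1 < Real.exp ε := by rw [hexp]; linarith
  have hkey : |N / (x * U x) - I| ≤ (Real.exp ε - 1) * I := by
    rw [abs_le]
    constructor
    · -- lower: I - N/P ≤ (e^ε - 1) I, using e^{-ε} ≥ 2 - e^ε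
      have h2 : 2 - Real.exp ε ≤ Real.exp (-ε) := by
        rw [hee]
        have hp : 0 < Real.exp ε := Real.exp_pos ε
        have hpi : 0 < (Real.exp ε)⁻¹ := inv_pos.2 hp
        have h3 : (Real.exp ε)⁻¹ * Real.exp ε = 1 := inv_mul_cancel₀ (ne_of_gt hp)
        nlinarith [mul_nonneg (sq_nonneg (Real.exp ε - 1)) hpi.le]
      nlinarith [hNP2, hI0]
    · nlinarith [hNP1, hI0]
  have hfin : (Real.exp ε - 1) * I < δ := by
    rw [hexp]
    have hII : I / (I+1) ≤ 1 := by
      rw [div_le_one (by linarith)]; linarith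
    have : (1 + δ/(2*(I+1)) - 1) * I = δ/2 * (I/(I+1)) := by
      field_simp
      ring
    rw [this]
    nlinarith
  linarith [hkey, hfin]

lemma Vpos (U : ℝ → ℝ) (hUpos : ∀ x > 0, 0 < U x)
    (hloc : ∀ x > 0, IntegrableOn U (Ioc 0 x) volume) (x : ℝ) (hx : 0 < x) :
    0 < ∫ t in Ioc (0:ℝ) x, U t := by
  rw [setIntegral_pos_iff_support_of_nonneg_ae
    ((ae_restrict_iff' measurableSet_Ioc).2 (ae_of_all _ fun t ht => (hUpos t ht.1).le))
    (hloc x hx)]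
  calc (0:ENNReal) < ENNReal.ofReal x := by simpa using hx
    _ = volume (Ioc (0:ℝ) x) := by rw [Real.volume_Ioc]; norm_num
    _ ≤ volume (Function.support U ∩ Ioc 0 x) :=
        measure_mono (fun t ht => ⟨ne_of_gt (hUpos t ht.1), ht⟩)

lemma Vmono (U : ℝ → ℝ) (hUpos : ∀ x > 0, 0 < U x)
    (hloc : ∀ x > 0, IntegrableOn U (Ioc 0 x) volume) :
    Monotone (fun x => ∫ t in Ioc (0:ℝ) x, U t) := by
  intro x y hxy
  by_cases hy : 0 < y
  · exact setIntegral_mono_set (hloc y hy)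
      ((ae_restrict_iff' measurableSet_Ioc).2 (ae_of_all _ fun t ht => (hUpos t ht.1).le))
      (HasSubset.Subset.eventuallyLE (Ioc_subset_Ioc le_rfl hxy))
  · push_neg at hy
    have h1 : Ioc (0:ℝ) x = ∅ := Ioc_eq_empty (by intro h; exact absurd (lt_of_lt_of_le h hxy) (not_lt.2 hy))
    have h2 : Ioc (0:ℝ) y = ∅ := Ioc_eq_empty (by intro h; exact absurd h (not_lt.2 hy))
    simp [h1, h2]

lemma part1top (U : ℝ → ℝ) (hUm : Measurable U) (hUpos : ∀ x > 0, 0 < U x) (α : ℝ)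
    (hloc : ∀ x > 0, IntegrableOn U (Ioc 0 x) volume)
    (hrv : ∀ q > 0, Tendsto (fun x : ℝ => U (q * x) / U x) atTop (𝓝 (q ^ (-α))))
    (htop : Tendsto (fun x => ∫ t in Ioc (0:ℝ) x, U t) atTop atTop)
    (q : ℝ) (hq : 0 < q) :
    Tendsto (fun x : ℝ => (∫ t in Ioc (0:ℝ) (q*x), U t) / ∫ t in Ioc (0:ℝ) x, U t)
      atTop (𝓝 (q ^ (1-α))) := by
  set c : ℝ := q ^ (1-α) with hcdef
  have hc : c = q * q ^ (-α) := by
    rw [hcdef, show (1:ℝ)-α = 1 + (-α) by ring, Real.rpow_add hq, Real.rpow_one]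
  rw [Metric.tendsto_nhds]
  intro δ hδ
  set ε : ℝ := δ/3 with hεdef
  have hε : 0 < ε := by positivity
  have hg : ∀ᶠ t : ℝ in atTop, |q * U (q*t) - c * U t| ≤ ε * U t := by
    have h1 := hrv q hq
    rw [Metric.tendsto_nhds] at h1
    filter_upwards [h1 (ε/q) (by positivity), eventually_gt_atTop 0] with t ht ht0
    have hUt : 0 < U t := hUpos t ht0
    rw [Real.dist_eq] at ht
    have expand : q * U (q*t) - c * U t = (q * U t) * (U (q*t)/U t - q^(-α)) := by
      field_simp [hc]; rw [hc]; ring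
    rw [expand, abs_mul, abs_of_pos (by positivity : (0:ℝ) < q * U t)]
    calc q * U t * |U (q*t)/U t - q^(-α)| ≤ q * U t * (ε/q) :=
          mul_le_mul_of_nonneg_left ht.le (by positivity)
      _ = ε * U t := by field_simp
  obtain ⟨M₀, hM₀⟩ := eventually_atTop.1 hg
  set M : ℝ := max M₀ 1 with hMdef
  have hM1 : 0 < M := lt_of_lt_of_le one_pos (le_max_right _ _)
  have hMg : ∀ t, M ≤ t → |q * U (q*t) - c * U t| ≤ ε * U t :=
    fun t ht => hM₀ t (le_trans (le_max_left _ _) ht)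
  set K : ℝ := |∫ t in (0:ℝ)..M, (q * U (q*t) - c * U t)| with hKdef
  have hK0 : 0 ≤ K := abs_nonneg _
  filter_upwards [eventually_ge_atTop M, htop.eventually_ge_atTop (max 1 (K/ε))]
    with x hxM hVx
  have hx0 : 0 < x := lt_of_lt_of_le hM1 hxM
  have hqx0 : 0 < q * x := by positivity
  set V : ℝ → ℝ := fun y => ∫ t in Ioc (0:ℝ) y, U t with hVdef
  have hVx1 : (1:ℝ) ≤ V x := le_trans (le_max_left _ _) hVx
  have hVxK : K / ε ≤ V x := le_trans (le_max_right _ _) hVx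
  have hVxpos : 0 < V x := lt_of_lt_of_le one_pos hVx1
  have hiU1 : IntervalIntegrable U volume 0 x :=
    (intervalIntegrable_iff_integrableOn_Ioc_of_le hx0.le).2 (hloc x hx0)
  have hiQ : IntervalIntegrable (fun t => U (q*t)) volume 0 x := by
    have h2 := ((intervalIntegrable_iff_integrableOn_Ioc_of_le hqx0.le).2
      (hloc (q*x) hqx0)).comp_mul_left (c := q)
    have e1 : (0:ℝ)/q = 0 := by simp
    have e2 : (q*x)/q = x := by field_simp
    rwa [e1, e2] at h2
  have hsub : V (q*x) = q * ∫ t in (0:ℝ)..x, U (q*t) := by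
    rw [intervalIntegral.integral_comp_mul_left U (ne_of_gt hq), smul_eq_mul, mul_zero]
    rw [intervalIntegral.integral_of_le hqx0.le, hVdef]
    field_simp
  set g : ℝ → ℝ := fun t => q * U (q*t) - c * U t with hgdef
  have higx : IntervalIntegrable g volume 0 x := (hiQ.const_mul q).sub (hiU1.const_mul c)
  have hiM : IntervalIntegrable g volume 0 M :=
    higx.mono_set (by rw [uIcc_of_le hM1.le, uIcc_of_le hx0.le]; exact Icc_subset_Icc le_rfl hxM)
  have hiMx : IntervalIntegrable g volume M x :=
    higx.mono_set (by rw [uIcc_of_le hxM, uIcc_of_le hx0.le]; exact Icc_subset_Icc hM1.le le_rfl)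
  have hiUMx : IntervalIntegrable U volume M x :=
    hiU1.mono_set (by rw [uIcc_of_le hxM, uIcc_of_le hx0.le]; exact Icc_subset_Icc hM1.le le_rfl)
  have hkey : V (q*x) - c * V x = ∫ t in (0:ℝ)..x, g t := by
    rw [hsub, hVdef]
    simp only []
    rw [← intervalIntegral.integral_of_le hx0.le]
    rw [intervalIntegral.integral_sub (hiQ.const_mul q) (hiU1.const_mul c),
      intervalIntegral.integral_const_mul, intervalIntegral.integral_const_mul]
  have hsplit : ∫ t in (0:ℝ)..x, g t = (∫ t in (0:ℝ)..M, g t) + ∫ t in M..x, g t :=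
    (intervalIntegral.integral_add_adjacent_intervals hiM hiMx).symm
  have htail : |∫ t in M..x, g t| ≤ ε * V x := by
    have h1 : |∫ t in M..x, g t| ≤ ∫ t in M..x, |g t| :=
      intervalIntegral.abs_integral_le_integral_abs hxM
    have h2 : (∫ t in M..x, |g t|) ≤ ∫ t in M..x, ε * U t := by
      apply intervalIntegral.integral_mono_on hxM hiMx.abs (hiUMx.const_mul ε)
      intro t ht
      exact hMg t ht.1
    have h3 : (∫ t in M..x, ε * U t) = ε * ∫ t in M..x, U t := by
      rw [intervalIntegral.integral_const_mul]
    have h4 : (∫ t in M..x, U t) ≤ V x := by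
      rw [intervalIntegral.integral_of_le hxM, hVdef]
      apply setIntegral_mono_set (hloc x hx0)
        ((ae_restrict_iff' measurableSet_Ioc).2 (ae_of_all _ fun t ht => (hUpos t ht.1).le))
      exact HasSubset.Subset.eventuallyLE (Ioc_subset_Ioc hM1.le le_rfl)
    calc |∫ t in M..x, g t| ≤ ∫ t in M..x, |g t| := h1
      _ ≤ ∫ t in M..x, ε * U t := h2
      _ = ε * ∫ t in M..x, U t := h3
      _ ≤ ε * V x := by nlinarith
  have hbound : |V (q*x) - c * V x| ≤ K + ε * V x := by
    rw [hkey, hsplit]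
    calc |(∫ t in (0:ℝ)..M, g t) + ∫ t in M..x, g t|
        ≤ |∫ t in (0:ℝ)..M, g t| + |∫ t in M..x, g t| := abs_add_le _ _
      _ ≤ K + ε * V x := add_le_add le_rfl htail
  rw [Real.dist_eq]
  have e3 : V (q*x) / V x - c = (V (q*x) - c * V x) / V x := by
    field_simp
  have hKV : K ≤ ε * V x := by
    rw [div_le_iff₀ hε] at hVxK
    nlinarith
  have habs : |V (q*x) - c * V x| ≤ 2 * ε * V x := by
    calc |V (q*x) - c * V x| ≤ K + ε * V x := hbound
      _ ≤ 2 * ε * V x := by nlinarith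
  have hfin : |V (q*x) / V x - c| ≤ 2 * ε := by
    rw [e3, abs_div, abs_of_pos hVxpos, div_le_iff₀ hVxpos]
    nlinarith
  have h2δ : 2 * ε < δ := by rw [hεdef]; linarith
  linarith [hfin, h2δ]

lemma Vdiff_eq (U : ℝ → ℝ)
    (hloc : ∀ x > 0, IntegrableOn U (Ioc 0 x) volume) (x : ℝ) (hx : 0 < x) :
    (∫ t in Ioc (0:ℝ) (2*x), U t) - (∫ t in Ioc (0:ℝ) x, U t) = ∫ t in x..(2*x), U t := by
  have hx2 : x ≤ 2*x := by linarith
  have h2x0 : (0:ℝ) < 2*x := by linarith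
  have hiU1 : IntervalIntegrable U volume 0 x :=
    (intervalIntegrable_iff_integrableOn_Ioc_of_le hx.le).2 (hloc x hx)
  have hiU2 : IntervalIntegrable U volume x (2*x) :=
    (intervalIntegrable_iff_integrableOn_Ioc_of_le hx2).2
      ((hloc (2*x) h2x0).mono_set (Ioc_subset_Ioc hx.le le_rfl))
  rw [← intervalIntegral.integral_of_le hx.le, ← intervalIntegral.integral_of_le h2x0.le,
    ← intervalIntegral.integral_add_adjacent_intervals hiU1 hiU2]
  ring

lemma Vdiffpos (U : ℝ → ℝ) (hUpos : ∀ x > 0, 0 < U x)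
    (hloc : ∀ x > 0, IntegrableOn U (Ioc 0 x) volume) (x : ℝ) (hx : 0 < x) :
    0 < (∫ t in Ioc (0:ℝ) (2*x), U t) - (∫ t in Ioc (0:ℝ) x, U t) := by
  rw [Vdiff_eq U hloc x hx]
  apply intervalIntegral.intervalIntegral_pos_of_pos_on
  · exact (intervalIntegrable_iff_integrableOn_Ioc_of_le (by linarith)).2
      ((hloc (2*x) (by linarith)).mono_set (Ioc_subset_Ioc hx.le le_rfl))
  · intro t ht
    exact hUpos t (lt_trans hx ht.1)
  · linarith

theorem stmt14 (U : ℝ → ℝ) (hUm : Measurable U) (hUpos : ∀ x > 0, 0 < U x) (α : ℝ) (hα : α ≤ 1)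
    (hloc : ∀ x > 0, IntegrableOn U (Ioc 0 x) volume)
    (hrv : ∀ q > 0, Tendsto (fun x : ℝ => U (q * x) / U x) atTop (𝓝 (q ^ (-α)))) :
    (∀ q > 0, Tendsto
        (fun x : ℝ => (∫ t in Ioc (0:ℝ) (q * x), U t) / ∫ t in Ioc (0:ℝ) x, U t)
        atTop (𝓝 (q ^ (1 - α)))) ∧
    Tendsto (fun x : ℝ => x * U x / ∫ t in Ioc (0:ℝ) x, U t) atTop (𝓝 (1 - α)) := by
  have hVmono := Vmono U hUpos hloc
  have hI2pos : 0 < ∫ s in (1:ℝ)..2, s ^ (-α) := by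
    apply intervalIntegral.intervalIntegral_pos_of_pos_on
    · apply ContinuousOn.intervalIntegrable
      apply ContinuousOn.rpow_const continuousOn_id
      intro s hs
      rw [uIcc_of_le (by norm_num : (1:ℝ) ≤ 2)] at hs
      exact Or.inl (ne_of_gt (lt_of_lt_of_le one_pos hs.1))
    · intro s hs
      exact Real.rpow_pos_of_pos (lt_trans one_pos hs.1) _
    · norm_num
  have hA2 := diff_tendsto U hUm hUpos α hloc hrv 2 one_lt_two
  rcases tendsto_of_monotone hVmono with htop | ⟨S, hS⟩
  · -- case V → ∞
    have hpart1 : ∀ q > 0, Tendsto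
        (fun x : ℝ => (∫ t in Ioc (0:ℝ) (q * x), U t) / ∫ t in Ioc (0:ℝ) x, U t)
        atTop (𝓝 (q ^ (1 - α))) :=
      fun q hq => part1top U hUm hUpos α hloc hrv htop q hq
    refine ⟨hpart1, ?_⟩
    have h2 := hpart1 2 two_pos
    have hb := ((h2.sub_const 1).div hA2 (ne_of_gt hI2pos))
    have hval : ((2:ℝ) ^ ((1:ℝ) - α) - 1) / (∫ s in (1:ℝ)..2, s ^ (-α)) = 1 - α := by
      by_cases hα1 : α = 1
      · subst hα1
        norm_num
      · have hαlt : α < 1 := lt_of_le_of_ne hα hα1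
        have hIval : (∫ s in (1:ℝ)..2, s ^ (-α)) = ((2:ℝ) ^ ((1:ℝ) - α) - 1) / (1 - α) := by
          rw [integral_rpow (Or.inl (by linarith : (-1:ℝ) < -α))]
          rw [Real.one_rpow]
          norm_num
          ring_nf
        rw [hIval]
        have h1lt : (1:ℝ) < 2 ^ ((1:ℝ) - α) :=
          Real.one_lt_rpow_iff_of_pos two_pos |>.2 (Or.inl ⟨one_lt_two, by linarith⟩)
        have hne : (2:ℝ) ^ ((1:ℝ) - α) - 1 ≠ 0 := ne_of_gt (by linarith)
        field_simp
      -- end hval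
    rw [hval] at hb
    apply hb.congr'
    filter_upwards [eventually_ge_atTop 1] with x hx1
    have hx0 : 0 < x := lt_of_lt_of_le one_pos hx1
    have hVx : 0 < ∫ t in Ioc (0:ℝ) x, U t := Vpos U hUpos hloc x hx0
    have hd : 0 < (∫ t in Ioc (0:ℝ) (2*x), U t) - ∫ t in Ioc (0:ℝ) x, U t :=
      Vdiffpos U hUpos hloc x hx0
    have hu : 0 < x * U x := mul_pos hx0 (hUpos x hx0)
    have e1 : (∫ t in Ioc (0:ℝ) (2*x), U t) / (∫ t in Ioc (0:ℝ) x, U t) - 1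
        = ((∫ t in Ioc (0:ℝ) (2*x), U t) - ∫ t in Ioc (0:ℝ) x, U t) / ∫ t in Ioc (0:ℝ) x, U t := by
      field_simp
    have gen : ∀ d v u : ℝ, d ≠ 0 → u ≠ 0 → v ≠ 0 → (d/v)/(d/u) = u/v := by
      intro d v u hd hu hv
      field_simp
    simp only [Pi.div_apply]
    rw [e1, gen _ _ _ (ne_of_gt hd) (ne_of_gt hu) (ne_of_gt hVx)]
  · -- case V → S < ∞
    have hS1 : (∫ t in Ioc (0:ℝ) 1, U t) ≤ S := hVmono.ge_of_tendsto hS 1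
    have hS0 : 0 < S := lt_of_lt_of_le (Vpos U hUpos hloc 1 one_pos) hS1
    have hmul2 : Tendsto (fun x : ℝ => 2 * x) atTop atTop :=
      Tendsto.const_mul_atTop two_pos tendsto_id
    have hS2 : Tendsto (fun x : ℝ => ∫ t in Ioc (0:ℝ) (2*x), U t) atTop (𝓝 S) :=
      hS.comp hmul2
    have hnum : Tendsto (fun x : ℝ => (∫ t in Ioc (0:ℝ) (2*x), U t) - ∫ t in Ioc (0:ℝ) x, U t)
        atTop (𝓝 0) := by
      have := hS2.sub hS
      simpa using this
    have hxU0 : Tendsto (fun x : ℝ => x * U x) atTop (𝓝 0) := by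
      have h3 := hnum.div hA2 (ne_of_gt hI2pos)
      rw [zero_div] at h3
      apply h3.congr'
      filter_upwards [eventually_gt_atTop 0] with x hx0
      have hd : 0 < (∫ t in Ioc (0:ℝ) (2*x), U t) - ∫ t in Ioc (0:ℝ) x, U t :=
        Vdiffpos U hUpos hloc x hx0
      have hu : 0 < x * U x := mul_pos hx0 (hUpos x hx0)
      simp only [Pi.div_apply]
      field_simp
    have hα1 : α = 1 := by
      by_contra hne
      have hαlt : α < 1 := lt_of_le_of_ne hα hne
      have hc : (1:ℝ) < 2 ^ ((1:ℝ) - α) :=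
        Real.one_lt_rpow_iff_of_pos two_pos |>.2 (Or.inl ⟨one_lt_two, by linarith⟩)
      have h2c : (2:ℝ) ^ ((1:ℝ)-α) = 2 * 2 ^ (-α) := by
        rw [show (1:ℝ)-α = 1 + (-α) by ring, Real.rpow_add two_pos, Real.rpow_one]
      have hratio : Tendsto (fun x : ℝ => (2*x*U (2*x))/(x*U x)) atTop (𝓝 (2 ^ ((1:ℝ)-α))) := by
        have h4 := (hrv 2 two_pos).const_mul 2
        rw [← h2c] at h4
        apply h4.congr'
        filter_upwards [eventually_gt_atTop 0] with x hx0
        have hUx : 0 < U x := hUpos x hx0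
        field_simp
      set r : ℝ := (1 + 2 ^ ((1:ℝ)-α))/2 with hrdef
      have hr1 : 1 < r := by rw [hrdef]; linarith
      have hrc : r < 2 ^ ((1:ℝ)-α) := by rw [hrdef]; linarith
      have hev : ∀ᶠ x : ℝ in atTop, r * (x*U x) < 2*x*U (2*x) ∧ 1 < x := by
        rw [Metric.tendsto_nhds] at hratio
        filter_upwards [hratio (2 ^ ((1:ℝ)-α) - r) (by linarith), eventually_gt_atTop 1]
          with x hd hx1
        refine ⟨?_, hx1⟩
        rw [Real.dist_eq, abs_lt] at hd
        have hx0 : 0 < x := lt_trans one_pos hx1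
        have hu : 0 < x * U x := mul_pos hx0 (hUpos x hx0)
        have : r < (2*x*U (2*x))/(x*U x) := by linarith
        calc r * (x*U x) < ((2*x*U (2*x))/(x*U x)) * (x*U x) :=
              mul_lt_mul_of_pos_right this hu
          _ = 2*x*U (2*x) := div_mul_cancel₀ _ hu.ne'
      obtain ⟨X₀, hX₀⟩ := eventually_atTop.1 hev
      set X : ℝ := max X₀ 2 with hXdef
      have hX2 : (2:ℝ) ≤ X := le_max_right _ _
      have hX0 : 0 < X := by linarith
      have hXprop : ∀ y, X ≤ y → r * (y*U y) < 2*y*U (2*y) :=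
        fun y hy => (hX₀ y (le_trans (le_max_left _ _) hy)).1
      have hgrow : ∀ n : ℕ, X * U X ≤ (2^n * X) * U (2^n * X) := by
        intro n
        induction n with
        | zero => simp
        | succ n ih =>
          have h2n : (1:ℝ) ≤ 2^n := one_le_pow₀ (by norm_num : (1:ℝ) ≤ 2)
          have hXn : X ≤ 2^n * X := by nlinarith
          have h7 := hXprop (2^n * X) hXn
          have e2 : 2*((2:ℝ)^n*X) = 2^(n+1)*X := by ring
          rw [e2] at h7
          have hposn : 0 < ((2:ℝ)^n * X) * U ((2:ℝ)^n * X) :=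
            mul_pos (mul_pos (pow_pos two_pos n) hX0) (hUpos _ (mul_pos (pow_pos two_pos n) hX0))
          have h8 : ((2:ℝ)^n * X) * U ((2:ℝ)^n * X) ≤ r * (((2:ℝ)^n * X) * U ((2:ℝ)^n * X)) := by
            nlinarith [mul_nonneg hposn.le (sub_pos.2 hr1).le]
          linarith
      have hseqtop : Tendsto (fun n : ℕ => (2:ℝ)^n * X) atTop atTop :=
        Tendsto.atTop_mul_const hX0 (tendsto_pow_atTop_atTop_of_one_lt one_lt_two)
      have hseq0 : Tendsto (fun n : ℕ => ((2:ℝ)^n * X) * U ((2:ℝ)^n * X)) atTop (𝓝 0) :=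
        hxU0.comp hseqtop
      have hXU : 0 < X * U X := mul_pos hX0 (hUpos X hX0)
      rw [Metric.tendsto_nhds] at hseq0
      obtain ⟨n, hn⟩ := (hseq0 (X * U X) hXU).exists
      rw [Real.dist_eq, sub_zero, abs_lt] at hn
      linarith [hgrow n]
    subst hα1
    norm_num
    constructor
    · intro q hq
      have hmulq : Tendsto (fun x : ℝ => q * x) atTop atTop :=
        Tendsto.const_mul_atTop hq tendsto_id
      have h5 : Tendsto (fun x : ℝ => (∫ t in Ioc (0:ℝ) (q*x), U t) / ∫ t in Ioc (0:ℝ) x, U t)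
          atTop (𝓝 (S/S)) := (hS.comp hmulq).div hS (ne_of_gt hS0)
      rw [div_self (ne_of_gt hS0)] at h5
      exact h5
    · have h6 := hxU0.div hS (ne_of_gt hS0)
      rw [zero_div] at h6
      exact h6
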